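/- Let l ≥ 1 be a natural number, let pos : Fin l → ℤ be injective, and let p ∈ ℤ. Then the number of indices i with |pos(i) − p| ≥ l/4 is at least l/2 − 1; formally, the cardinality (cast to ℝ) of {i : Fin l | (l : ℝ)/4 ≤ |pos(i) − p|} is at least (l : ℝ)/2 − 1. -/

import Mathlib

open Classical in
/-- **Geometric core of the line-graph lower bound (Lemma V.8).** If `l ≥ 1` transactions
occupy distinct integer positions on a line and all access an object at position `p`,
then at least `l/2 − 1` of them lie at distance at least `l/4` from `p`. -/
theorem far_transactions_count (l : ℕ) (hl : 1 ≤ l) (pos : Fin l → ℤ)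
    (hpos : Function.Injective pos) (p : ℤ) :
    (l : ℝ) / 2 - 1 ≤
      (({i : Fin l | (l : ℝ) / 4 ≤ |((pos i : ℤ) : ℝ) - (p : ℝ)|}.ncard : ℝ)) := by
  classical
  set P : Fin l → Prop := fun i => (l : ℝ) / 4 ≤ |((pos i : ℤ) : ℝ) - (p : ℝ)| with hP
  have hset : {i : Fin l | P i}.ncard = (Finset.univ.filter P).card := by
    rw [Set.ncard_eq_toFinset_card']
    congr 1
    ext i
    simp
  set b : ℤ := ((l : ℤ) - 1) / 4 with hb
  have hb0 : 0 ≤ b := by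
    apply Int.ediv_nonneg _ (by norm_num)
    omega
  -- the complement maps injectively into Icc (p - b) (p + b)
  have hmap : (Finset.univ.filter (fun i => ¬ P i)).card ≤ (Finset.Icc (p - b) (p + b)).card := by
    apply Finset.card_le_card_of_injOn pos
    · intro i hi
      simp only [Finset.mem_coe, Finset.mem_filter, hP] at hi
      have h1 : |((pos i : ℤ) : ℝ) - (p : ℝ)| < (l : ℝ) / 4 := not_le.mp hi.2
      have h2 : (|pos i - p| : ℤ) * 4 < (l : ℤ) := by
        have h1' : (|pos i - p| : ℝ) < (l : ℝ) / 4 := by push_cast; exact h1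
        have : ((|pos i - p| : ℤ) : ℝ) * 4 < (l : ℝ) := by push_cast; linarith
        exact_mod_cast this
      have h3 : |pos i - p| ≤ b := by
        rw [hb, Int.le_ediv_iff_mul_le (by norm_num)]
        omega
      rw [Finset.mem_coe, Finset.mem_Icc]
      rw [abs_le] at h3
      omega
    · intro a _ c _ hac
      exact hpos hac
  have hcard : (Finset.Icc (p - b) (p + b)).card = (2 * b + 1).toNat := by
    rw [Int.card_Icc]
    congr 1
    omega
  have hbr : (b : ℝ) * 4 ≤ (l : ℝ) - 1 := by
    have := Int.ediv_mul_le ((l : ℤ) - 1) (show (4:ℤ) ≠ 0 by norm_num)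
    have : b * 4 ≤ (l : ℤ) - 1 := this
    exact_mod_cast this
  have hsplit : (Finset.univ.filter P).card + (Finset.univ.filter (fun i => ¬ P i)).card = l := by
    rw [Finset.card_filter_add_card_filter_not]
    simp
  have hcompl : ((Finset.univ.filter (fun i => ¬ P i)).card : ℝ) ≤ 2 * (b : ℝ) + 1 := by
    have h := hmap
    rw [hcard] at h
    have : ((2 * b + 1).toNat : ℝ) = 2 * (b : ℝ) + 1 := by
      have h4 : ((2 * b + 1).toNat : ℤ) = 2 * b + 1 := Int.toNat_of_nonneg (by omega)
      have := congrArg (fun x : ℤ => (x : ℝ)) h4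
      push_cast at this
      linarith
    calc ((Finset.univ.filter (fun i => ¬ P i)).card : ℝ) ≤ ((2 * b + 1).toNat : ℝ) := by
          exact_mod_cast h
      _ = 2 * (b : ℝ) + 1 := this
  rw [hset]
  have hS : ((Finset.univ.filter P).card : ℝ) = (l : ℝ) - ((Finset.univ.filter (fun i => ¬ P i)).card : ℝ) := by
    have : ((Finset.univ.filter P).card : ℝ) + ((Finset.univ.filter (fun i => ¬ P i)).card : ℝ) = l := by
      exact_mod_cast hsplit
    linarith
  rw [hS]
  linarith
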